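/- Let p-values p1,...,pn consist of true p-values, i.i.d. uniform(0,1) and independent of the false p-values, and consider the BH step-down test with critical values α_{i:n} = (i/n)α for arbitrary α > 0: R_SD = max{i : p_{j:n} ≤ α_{j:n} ∀ j ≤ i}, V_SD = #{true p-values ≤ α_{R_SD:n}}. Then E[V_SD/max(R_SD,1)] ≤ (E[N_0]/n)·α, where N_0 is the number of true p-values. -/

import Mathlib

open MeasureTheory ProbabilityTheory Finset
open scoped Classical

/-- number of p-values `≤ t`. -/
noncomputable def countLe {n : ℕ} (p : Fin n → ℝ) (t : ℝ) : ℕ :=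
  (Finset.univ.filter fun i => p i ≤ t).card

/-- step-up rejection count: `c i` is the `(i+1)`-th critical value; for nondecreasing
critical values this equals `max {k : p_{k:n} ≤ c_{k:n}}` (with `max ∅ = 0`). -/
noncomputable def suCount {n : ℕ} (c : Fin n → ℝ) (p : Fin n → ℝ) : ℕ :=
  (Finset.univ.filter fun k : Fin n => k.1 + 1 ≤ countLe p (c k)).sup fun k => k.1 + 1

/-- step-down rejection count. -/
noncomputable def sdCount {n : ℕ} (c : Fin n → ℝ) (p : Fin n → ℝ) : ℕ :=
  (Finset.univ.filter fun k : Fin n =>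
    ∀ j : Fin n, j ≤ k → j.1 + 1 ≤ countLe p (c j)).sup fun k => k.1 + 1

/-- the critical value `c_{R:n}`, with the convention `c_{0:n} = 0`. -/
noncomputable def threshold {n : ℕ} (c : Fin n → ℝ) (R : ℕ) : ℝ :=
  if h : 0 < R ∧ R ≤ n then c ⟨R - 1, by omega⟩ else 0

/-- the σ-algebra generated by `(F̂_n(t))_{t ≥ λ}`. -/
noncomputable def ecdfSigma {Ω : Type*} [MeasurableSpace Ω] {n : ℕ}
    (p : Fin n → Ω → ℝ) (lam : ℝ) : MeasurableSpace Ω :=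
  MeasurableSpace.comap
    (fun ω => fun t : Set.Ici lam => (countLe (fun i => p i ω) (t : ℝ) : ℝ))
    MeasurableSpace.pi


lemma sdCount_le {n : ℕ} (c p : Fin n → ℝ) : sdCount c p ≤ n :=
  Finset.sup_le fun k _ => k.2

lemma le_sdCount {n : ℕ} {c p : Fin n → ℝ} {k : Fin n}
    (h : ∀ j : Fin n, j ≤ k → j.1 + 1 ≤ countLe p (c j)) : k.1 + 1 ≤ sdCount c p :=
  Finset.le_sup (f := fun k : Fin n => k.1 + 1) (Finset.mem_filter.2 ⟨Finset.mem_univ _, h⟩)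

lemma sdCount_spec {n : ℕ} {c p : Fin n → ℝ} {j : Fin n} (hj : j.1 < sdCount c p) :
    j.1 + 1 ≤ countLe p (c j) := by
  have hne : (Finset.univ.filter fun k : Fin n =>
      ∀ j : Fin n, j ≤ k → j.1 + 1 ≤ countLe p (c j)).Nonempty := by
    by_contra h
    rw [Finset.not_nonempty_iff_eq_empty] at h
    simp only [sdCount, h, Finset.sup_empty, Nat.bot_eq_zero] at hj
    omega
  obtain ⟨k, hk, hk2⟩ := Finset.exists_mem_eq_sup _ hne fun k : Fin n => k.1 + 1
  rw [Finset.mem_filter] at hk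
  have hkval : sdCount c p = k.1 + 1 := hk2
  exact hk.2 j (by rw [hkval] at hj; exact Fin.le_def.2 (by omega))

lemma countLe_le_countLe {n : ℕ} {p q : Fin n → ℝ} (t : ℝ) (h : ∀ i, p i ≤ t → q i ≤ t) :
    countLe p t ≤ countLe q t :=
  Finset.card_le_card (Finset.monotone_filter_right _ fun i _ hi => h i hi)

lemma sdCount_update_eq {n : ℕ} {c p : Fin n → ℝ} {i : Fin n} (hc : Monotone c)
    (hpi : 0 < p i) (k : Fin n) (hk : k.1 < sdCount c p) (hpk : p i ≤ c k) :
    sdCount c (Function.update p i 0) = sdCount c p := by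
  set q := Function.update p i 0 with hq
  have hqle : ∀ j, q j ≤ p j := by
    intro j
    rw [hq, Function.update_apply]
    split
    · subst ‹j = i›; exact le_of_lt hpi
    · exact le_rfl
  -- R ≤ R'
  have h1 : sdCount c p ≤ sdCount c q := by
    refine Finset.sup_mono (Finset.monotone_filter_right _ fun l _ hl j hj => ?_)
    exact le_trans (hl j hj) (countLe_le_countLe _ fun r hr => le_trans (hqle r) hr)
  refine le_antisymm ?_ h1
  by_contra hlt
  push_neg at hlt
  have hRn : sdCount c p < n := lt_of_lt_of_le hlt (sdCount_le c q)
  set K : Fin n := ⟨sdCount c p, hRn⟩ with hK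
  have hclaim : ∀ j : Fin n, j ≤ K → j.1 + 1 ≤ countLe p (c j) := by
    intro j hj
    have hj' : j.1 ≤ sdCount c p := hj
    have hq1 : j.1 + 1 ≤ countLe q (c j) := sdCount_spec (lt_of_le_of_lt (by omega) hlt)
    rcases lt_or_eq_of_le hj' with hlt2 | heq
    · exact sdCount_spec hlt2
    · -- j.1 = sdCount c p, so c k ≤ c j and p i ≤ c j
      have hkj : k ≤ j := Fin.le_def.2 (by omega)
      have hpij : p i ≤ c j := le_trans hpk (hc hkj)
      refine le_trans hq1 (countLe_le_countLe _ fun r hr => ?_)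
      rcases eq_or_ne r i with rfl | hri
      · exact hpij
      · rw [hq, Function.update_apply, if_neg hri] at hr; exact hr
  have := le_sdCount hclaim
  simp only [hK] at this
  omega

section Meas
variable {α : Type*} [MeasurableSpace α]

lemma measurable_finsetSup {ι : Type*} (s : Finset ι) {g : ι → α → ℕ}
    (h : ∀ i, Measurable (g i)) : Measurable fun ω => s.sup fun i => g i ω := by
  classical
  induction s using Finset.cons_induction with
  | empty => simpa using measurable_const
  | cons i s his ih =>
      simp only [Finset.sup_cons]
      exact (h i).max ih

lemma measurable_countLe {n : ℕ} {p : Fin n → α → ℝ} (hp : ∀ i, Measurable (p i)) (t : ℝ) :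
    Measurable fun ω => countLe (fun i => p i ω) t := by
  simp only [countLe, Finset.card_filter]
  exact Finset.measurable_sum _ fun i _ =>
    Measurable.ite (measurableSet_le (hp i) measurable_const) measurable_const measurable_const

lemma sup_filter_eq_sup_ite {ι : Type*} (s : Finset ι) (Q : ι → Prop) [DecidablePred Q]
    (f : ι → ℕ) : (s.filter Q).sup f = s.sup fun k => if Q k then f k else 0 := by
  refine le_antisymm (Finset.sup_le fun k hk => ?_) (Finset.sup_le fun k hk => ?_)
  · rw [Finset.mem_filter] at hk
    exact le_trans (by simp [hk.2]) (Finset.le_sup (f := fun k => if Q k then f k else 0) hk.1)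
  · split
    · exact Finset.le_sup (f := f) (Finset.mem_filter.2 ⟨hk, ‹_›⟩)
    · exact Nat.zero_le _

lemma measurable_sdCount {n : ℕ} (c : Fin n → ℝ) {p : Fin n → α → ℝ}
    (hp : ∀ i, Measurable (p i)) : Measurable fun ω => sdCount c (fun i => p i ω) := by
  have : ∀ ω, sdCount c (fun i => p i ω) = Finset.univ.sup fun k : Fin n =>
      if (∀ j : Fin n, j ≤ k → j.1 + 1 ≤ countLe (fun i => p i ω) (c j)) then k.1 + 1 else 0 := by
    intro ω; exact sup_filter_eq_sup_ite _ _ _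
  simp only [this]
  refine measurable_finsetSup _ fun k => Measurable.ite ?_ measurable_const measurable_const
  have : {ω | ∀ j : Fin n, j ≤ k → j.1 + 1 ≤ countLe (fun i => p i ω) (c j)} =
      ⋂ j : Fin n, {ω | j ≤ k → j.1 + 1 ≤ countLe (fun i => p i ω) (c j)} := by
    ext ω; simp
  rw [show {x | (fun ω => ∀ j : Fin n, j ≤ k → j.1 + 1 ≤ countLe (fun i => p i ω) (c j)) x} =
    ⋂ j : Fin n, {ω | j ≤ k → j.1 + 1 ≤ countLe (fun i => p i ω) (c j)} from this]
  refine MeasurableSet.iInter fun j => ?_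
  by_cases hjk : j ≤ k
  · simp only [hjk, true_implies]
    exact measurable_countLe hp (c j) (MeasurableSet.of_discrete (s := Set.Ici (j.1+1)))
  · simp only [hjk, false_implies]
    exact MeasurableSet.univ.congr (by ext; simp)

end Meas

lemma abs_ite_div_le_one (P : Prop) [Decidable P] (M : ℕ) :
    |(if P then (1 : ℝ) else 0) / ((max M 1 : ℕ) : ℝ)| ≤ 1 := by
  have h1 : (1 : ℝ) ≤ ((max M 1 : ℕ) : ℝ) := by exact_mod_cast Nat.le_max_right M 1
  rw [abs_div, abs_of_nonneg (by positivity : (0 : ℝ) ≤ ((max M 1 : ℕ) : ℝ)),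
    div_le_one (by linarith)]
  split <;> simp <;> linarith

lemma key_bound {Ω : Type*} [MeasurableSpace Ω] (μ : Measure Ω) [IsProbabilityMeasure μ]
    {m : ℕ} (H : Fin (m + 1) → Ω → Bool) (U ξ : Fin (m + 1) → Ω → ℝ)
    (hUmeas : ∀ i, Measurable (U i)) (hξmeas : ∀ i, Measurable (ξ i))
    (hHmeas : ∀ i, Measurable (H i))
    (hUindep : iIndepFun U μ)
    (hUHξ : IndepFun (fun ω => fun i => U i ω)
      (fun ω => ((fun i => H i ω), (fun i => ξ i ω))) μ)
    (hunif : ∀ i, Measure.map (U i) μ = volume.restrict (Set.Ioo (0 : ℝ) 1))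
    (a : ℝ) (ha : 0 < a) (i : Fin (m + 1)) :
    ∫ ω,
      (if ((if H i ω then ξ i ω else U i ω) ≤
            (sdCount (fun k : Fin (m + 1) => ((k.1 + 1 : ℝ) / (m + 1)) * a)
                (fun j => if H j ω then ξ j ω else U j ω) : ℝ) / (m + 1) * a
          ∧ H i ω = false) then (1 : ℝ) else 0)
        / (max (sdCount (fun k : Fin (m + 1) => ((k.1 + 1 : ℝ) / (m + 1)) * a)
            (fun j => if H j ω then ξ j ω else U j ω)) 1 : ℕ) ∂μ
      ≤ a / (m + 1) * ∫ ω, (if H i ω = false then (1 : ℝ) else 0) ∂μ := by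
  set c : Fin (m + 1) → ℝ := fun k => ((k.1 + 1 : ℝ) / (m + 1)) * a with hc
  have hcmono : Monotone c := by
    intro x y hxy
    have h : (x.1 : ℝ) ≤ y.1 := by exact_mod_cast hxy
    show ((x.1 + 1 : ℝ) / (m + 1)) * a ≤ ((y.1 + 1 : ℝ) / (m + 1)) * a
    gcongr
    all_goals first | positivity | linarith
  set pv : Ω → Fin (m + 1) → ℝ := fun ω j => if H j ω then ξ j ω else U j ω with hpv
  have hpvmeas : ∀ j, Measurable fun ω => pv ω j := fun j =>
    Measurable.ite ((hHmeas j) (MeasurableSet.of_discrete (s := {true}))) (hξmeas j) (hUmeas j)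
  set R : Ω → ℕ := fun ω => sdCount c (pv ω) with hR
  have hRmeas : Measurable R := measurable_sdCount c hpvmeas
  set q : Ω → Fin (m + 1) → ℝ := fun ω => Function.update (pv ω) i 0 with hqdef
  set R' : Ω → ℕ := fun ω => sdCount c (q ω) with hR'
  set g : Ω → ℝ := fun ω =>
    (if (U i ω ≤ (R' ω : ℝ) / (m + 1) * a ∧ H i ω = false) then (1 : ℝ) else 0)
      / (max (R' ω) 1 : ℕ) with hg
  -- measurability of q components and R'
  have hqmeas : ∀ j, Measurable fun ω => q ω j := by
    intro j
    rcases eq_or_ne j i with rfl | hji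
    · simpa [hqdef, Function.update_self] using measurable_const
    · simpa [hqdef, Function.update_of_ne hji] using hpvmeas j
  have hR'meas : Measurable R' := measurable_sdCount c hqmeas
  -- a.e. the uniform p-values lie in (0,1)
  have hae : ∀ᵐ ω ∂μ, U i ω ∈ Set.Ioo (0 : ℝ) 1 := by
    have h0 : μ (U i ⁻¹' (Set.Ioo (0 : ℝ) 1)ᶜ) = 0 := by
      rw [← Measure.map_apply (hUmeas i) measurableSet_Ioo.compl, hunif i,
        Measure.restrict_apply measurableSet_Ioo.compl]
      simp
    exact (ae_iff).2 h0
  -- pointwise comparison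
  have hterm_le : ∀ᵐ ω ∂μ,
      (if (pv ω i ≤ (R ω : ℝ) / (m + 1) * a ∧ H i ω = false) then (1 : ℝ) else 0)
        / (max (R ω) 1 : ℕ) ≤ g ω := by
    filter_upwards [hae] with ω hU
    by_cases hcond : pv ω i ≤ (R ω : ℝ) / (m + 1) * a ∧ H i ω = false
    · obtain ⟨h1, h2⟩ := hcond
      have hpvi : pv ω i = U i ω := by simp [hpv, h2]
      have h0 : 0 < pv ω i := by rw [hpvi]; exact hU.1
      have hR1 : 1 ≤ R ω := by
        by_contra hR0
        have : R ω = 0 := by omega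
        rw [this] at h1
        simp only [Nat.cast_zero, zero_div, zero_mul] at h1
        linarith
      have hRn : R ω ≤ m + 1 := sdCount_le c (pv ω)
      set k : Fin (m + 1) := ⟨R ω - 1, by omega⟩ with hk
      have hck : c k = (R ω : ℝ) / (m + 1) * a := by
        have : ((R ω - 1 : ℕ) : ℝ) + 1 = (R ω : ℝ) := by
          have := hR1; push_cast [Nat.cast_sub this]; ring
        simp only [hc, hk, this]
      have hRR' : R' ω = R ω :=
        sdCount_update_eq hcmono h0 k (by show R ω - 1 < R ω; omega) (by rw [hck]; exact h1)
      have hcond' : U i ω ≤ (R' ω : ℝ) / (m + 1) * a ∧ H i ω = false :=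
        ⟨by rw [hRR', ← hpvi]; exact h1, h2⟩
      rw [hg]
      simp only [hRR', hpvi]
      exact le_refl _
    · rw [if_neg hcond, hg]
      simp only [zero_div]
      positivity

  -- integrability of term and g
  have hRcast : Measurable fun ω => ((R ω : ℝ) / (m + 1) * a) :=
    (measurable_from_nat (f := fun r : ℕ => (r : ℝ) / (m + 1) * a)).comp hRmeas
  have hR'cast : Measurable fun ω => ((R' ω : ℝ) / (m + 1) * a) :=
    (measurable_from_nat (f := fun r : ℕ => (r : ℝ) / (m + 1) * a)).comp hR'meas
  have htermmeas : Measurable fun ω =>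
      (if (pv ω i ≤ (R ω : ℝ) / (m + 1) * a ∧ H i ω = false) then (1 : ℝ) else 0)
        / (max (R ω) 1 : ℕ) := by
    refine Measurable.div ?_
      ((measurable_from_nat (f := fun r : ℕ => ((max r 1 : ℕ) : ℝ))).comp hRmeas)
    refine Measurable.ite (MeasurableSet.inter ?_ ?_) measurable_const measurable_const
    · exact measurableSet_le (hpvmeas i) hRcast
    · exact (hHmeas i) (MeasurableSet.of_discrete (s := {false}))
  have hgmeas : Measurable g := by
    rw [hg]
    refine Measurable.div ?_
      ((measurable_from_nat (f := fun r : ℕ => ((max r 1 : ℕ) : ℝ))).comp hR'meas)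
    refine Measurable.ite (MeasurableSet.inter ?_ ?_) measurable_const measurable_const
    · exact measurableSet_le (hUmeas i) hR'cast
    · exact (hHmeas i) (MeasurableSet.of_discrete (s := {false}))
  have hint_term : Integrable (fun ω =>
      (if (pv ω i ≤ (R ω : ℝ) / (m + 1) * a ∧ H i ω = false) then (1 : ℝ) else 0)
        / (max (R ω) 1 : ℕ)) μ := by
    refine Integrable.mono' (integrable_const 1) htermmeas.aestronglyMeasurable
      (Filter.Eventually.of_forall fun ω => ?_)
    rw [Real.norm_eq_abs]
    exact abs_ite_div_le_one _ _
  have hint_g : Integrable g μ := by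
    refine Integrable.mono' (integrable_const 1) hgmeas.aestronglyMeasurable
      (Filter.Eventually.of_forall fun ω => ?_)
    rw [Real.norm_eq_abs, hg]
    exact abs_ite_div_le_one _ _
  -- the distributions
  set lam0 : Measure ℝ := volume.restrict (Set.Ioo (0 : ℝ) 1) with hlam0
  haveI hlam0prob : IsProbabilityMeasure lam0 :=
    ⟨by rw [hlam0, Measure.restrict_apply_univ, Real.volume_Ioo]; simp⟩
  set Uvec : Ω → Fin (m + 1) → ℝ := fun ω j => U j ω with hUvecdef
  have hUvecmeas : Measurable Uvec := measurable_pi_lambda _ hUmeas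
  set Z : Ω → (Fin (m + 1) → Bool) × (Fin (m + 1) → ℝ) :=
    fun ω => (fun j => H j ω, fun j => ξ j ω) with hZdef
  have hZmeas : Measurable Z :=
    (measurable_pi_lambda _ hHmeas).prodMk (measurable_pi_lambda _ hξmeas)
  set κ : Measure ((Fin (m + 1) → Bool) × (Fin (m + 1) → ℝ)) := Measure.map Z μ with hκ
  haveI : IsProbabilityMeasure κ := Measure.isProbabilityMeasure_map hZmeas.aemeasurable
  set P' : Measure (Fin m → ℝ) := Measure.pi (fun _ => lam0) with hP'
  have hP : Measure.map Uvec μ = Measure.pi (fun _ : Fin (m + 1) => lam0) := by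
    refine (Measure.pi_eq fun s hs => ?_).symm
    rw [Measure.map_apply hUvecmeas (MeasurableSet.univ_pi hs)]
    have hpre : Uvec ⁻¹' (Set.univ.pi s) = ⋂ j ∈ Finset.univ, U j ⁻¹' s j := by
      ext ω; simp [hUvecdef, Set.mem_pi]
    rw [hpre, hUindep.measure_inter_preimage_eq_mul Finset.univ (fun j _ => hs j)]
    exact Finset.prod_congr rfl fun j _ => by
      rw [← Measure.map_apply (hUmeas j) (hs j), hunif j]
  set T : Ω → (Fin (m + 1) → ℝ) × ((Fin (m + 1) → Bool) × (Fin (m + 1) → ℝ)) :=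
    fun ω => (Uvec ω, Z ω) with hTdef
  have hTmeas : Measurable T := hUvecmeas.prodMk hZmeas
  have hTmap : Measure.map T μ = (Measure.pi (fun _ : Fin (m + 1) => lam0)).prod κ := by
    have h2 : Measure.map T μ = (Measure.map Uvec μ).prod (Measure.map Z μ) :=
      (indepFun_iff_map_prod_eq_prod_map_map hUvecmeas.aemeasurable
        hZmeas.aemeasurable).mp hUHξ
    rw [h2, hP, hκ]
  set e : (Fin (m + 1) → ℝ) ≃ᵐ ℝ × (Fin m → ℝ) :=
    MeasurableEquiv.piFinSuccAbove (fun _ => ℝ) i with he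
  have mpe : MeasurePreserving e (Measure.pi fun _ : Fin (m + 1) => lam0) (lam0.prod P') :=
    measurePreserving_piFinSuccAbove (fun _ => lam0) i
  set Φ : (Fin (m + 1) → ℝ) × ((Fin (m + 1) → Bool) × (Fin (m + 1) → ℝ)) →
      ℝ × ((Fin m → ℝ) × ((Fin (m + 1) → Bool) × (Fin (m + 1) → ℝ))) :=
    fun v => (v.1 i, ((fun j => v.1 (i.succAbove j)), v.2)) with hΦdef
  have hΦeq : Φ = (MeasurableEquiv.prodAssoc ∘ Prod.map e id) := by
    funext v
    rfl
  have mpΦ : MeasurePreserving Φ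
      ((Measure.pi (fun _ : Fin (m + 1) => lam0)).prod κ) (lam0.prod (P'.prod κ)) := by
    rw [hΦeq]
    exact (measurePreserving_prodAssoc lam0 P' κ).comp (mpe.prod (MeasurePreserving.id κ))
  have mpall : MeasurePreserving (Φ ∘ T) μ (lam0.prod (P'.prod κ)) :=
    mpΦ.comp ⟨hTmeas, hTmap⟩
  -- the integrand on the product space
  set qf : (Fin m → ℝ) × ((Fin (m + 1) → Bool) × (Fin (m + 1) → ℝ)) → Fin (m + 1) → ℝ :=
    fun w => Function.update (fun j => if w.2.1 j then w.2.2 j else (i.insertNth (0 : ℝ) w.1 : Fin (m + 1) → ℝ) j) i 0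
    with hqfdef
  set F : ℝ × ((Fin m → ℝ) × ((Fin (m + 1) → Bool) × (Fin (m + 1) → ℝ))) → ℝ :=
    fun v => (if (v.1 ≤ (sdCount c (qf v.2) : ℝ) / (m + 1) * a ∧ v.2.2.1 i = false)
        then (1 : ℝ) else 0) / (max (sdCount c (qf v.2)) 1 : ℕ) with hFdef
  have hqfT : ∀ ω, qf ((Φ ∘ T) ω).2 = q ω := by
    intro ω
    funext j
    rcases eq_or_ne j i with rfl | hji
    · simp [hqfdef, hqdef, Function.update_self]
    · obtain ⟨j', rfl⟩ := Fin.exists_succAbove_eq hji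
      simp [hqfdef, hqdef, Function.update_of_ne hji, hpv, Fin.insertNth_apply_succAbove,
        hTdef, hΦdef, hZdef, hUvecdef]
  have hgF : ∀ ω, g ω = F ((Φ ∘ T) ω) := by
    intro ω
    rw [hg, hFdef]
    simp only [hqfT ω]
    rfl
  have hqfmeas : ∀ j, Measurable fun w : (Fin m → ℝ) ×
      ((Fin (m + 1) → Bool) × (Fin (m + 1) → ℝ)) => qf w j := by
    intro j
    rcases eq_or_ne j i with rfl | hji
    · simp only [hqfdef, Function.update_self]; exact measurable_const
    · simp only [hqfdef, Function.update_of_ne hji]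
      refine Measurable.ite ?_ ?_ ?_
      · have hm : Measurable fun w : (Fin m → ℝ) × ((Fin (m + 1) → Bool) × (Fin (m + 1) → ℝ)) =>
            w.2.1 j := (measurable_pi_apply j).comp (measurable_fst.comp measurable_snd)
        exact hm (MeasurableSet.of_discrete (s := {true}))
      · exact (measurable_pi_apply j).comp (measurable_snd.comp measurable_snd)
      · have : (fun w : (Fin m → ℝ) × ((Fin (m + 1) → Bool) × (Fin (m + 1) → ℝ)) =>
            (i.insertNth (0 : ℝ) w.1 : Fin (m + 1) → ℝ) j) = fun w => e.symm (0, w.1) j := rfl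
        rw [this]
        exact (measurable_pi_apply j).comp
          (e.symm.measurable.comp (measurable_const.prodMk measurable_fst))
  have hRRmeas : Measurable fun w => sdCount c (qf w) := measurable_sdCount c hqfmeas
  have hFmeas : Measurable F := by
    rw [hFdef]
    refine Measurable.div ?_
      ((measurable_from_nat (f := fun r : ℕ => ((max r 1 : ℕ) : ℝ))).comp
        (hRRmeas.comp measurable_snd))
    refine Measurable.ite (MeasurableSet.inter ?_ ?_) measurable_const measurable_const
    · exact measurableSet_le measurable_fst
        ((measurable_from_nat (f := fun r : ℕ => (r : ℝ) / (m + 1) * a)).comp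
          (hRRmeas.comp measurable_snd))
    · have hm : Measurable fun v : ℝ × ((Fin m → ℝ) × ((Fin (m + 1) → Bool) × (Fin (m + 1) → ℝ))) =>
          v.2.2.1 i := (measurable_pi_apply i).comp
            (measurable_fst.comp (measurable_snd.comp measurable_snd))
      exact hm (MeasurableSet.of_discrete (s := {false}))
  have hFint : Integrable F (lam0.prod (P'.prod κ)) := by
    refine Integrable.mono' (integrable_const 1) hFmeas.aestronglyMeasurable
      (Filter.Eventually.of_forall fun v => ?_)
    rw [Real.norm_eq_abs, hFdef]
    exact abs_ite_div_le_one _ _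
  have hstep1 : ∫ ω, g ω ∂μ = ∫ v, F v ∂(lam0.prod (P'.prod κ)) := by
    calc ∫ ω, g ω ∂μ = ∫ ω, F ((Φ ∘ T) ω) ∂μ := by simp_rw [hgF]
    _ = ∫ v, F v ∂(Measure.map (Φ ∘ T) μ) :=
      (integral_map mpall.measurable.aemeasurable hFmeas.aestronglyMeasurable).symm
    _ = _ := by rw [mpall.map_eq]
  have hsymm : ∫ v, F v ∂(lam0.prod (P'.prod κ))
      = ∫ w, (∫ u, F (u, w) ∂lam0) ∂(P'.prod κ) := integral_prod_symm F hFint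
  have hinner : ∀ w, (∫ u, F (u, w) ∂lam0)
      ≤ a / (m + 1) * (if w.2.1 i = false then (1 : ℝ) else 0) := by
    intro w
    by_cases hb : w.2.1 i = false
    · set r : ℕ := sdCount c (qf w) with hr
      set t : ℝ := (r : ℝ) / (m + 1) * a with htdef
      have ht0 : 0 ≤ t := by positivity
      have hFw : ∀ u, F (u, w)
          = Set.indicator (Set.Iic t) (fun _ => (1 : ℝ) / ((max r 1 : ℕ) : ℝ)) u := by
        intro u
        rw [hFdef]
        simp only [hb, and_true]
        by_cases hu : u ≤ t
        · rw [if_pos (by exact hu), Set.indicator_of_mem (Set.mem_Iic.2 hu)]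
        · rw [if_neg (by exact hu), Set.indicator_of_notMem (fun hmem => hu (Set.mem_Iic.1 hmem))]
          simp
      simp_rw [hFw]
      rw [integral_indicator_const _ measurableSet_Iic]
      have hmeas_le : (lam0 (Set.Iic t)).toReal ≤ t := by
        have h1 : lam0 (Set.Iic t) ≤ ENNReal.ofReal t := by
          rw [hlam0, Measure.restrict_apply measurableSet_Iic]
          have hsub : Set.Iic t ∩ Set.Ioo 0 1 ⊆ Set.Ioc 0 t :=
            fun x hx => Set.mem_Ioc.2 ⟨hx.2.1, hx.1⟩
          refine le_trans (measure_mono hsub) ?_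
          rw [Real.volume_Ioc]
          simp
        calc (lam0 (Set.Iic t)).toReal ≤ (ENNReal.ofReal t).toReal :=
          ENNReal.toReal_mono (by simp) h1
        _ = t := ENNReal.toReal_ofReal ht0
      have hfinal : (lam0 (Set.Iic t)).toReal • ((1 : ℝ) / ((max r 1 : ℕ) : ℝ)) ≤ a / (m + 1) := by
        rw [smul_eq_mul]
        have hden1 : (1 : ℝ) ≤ ((max r 1 : ℕ) : ℝ) := by exact_mod_cast Nat.le_max_right r 1
        have hnn : 0 ≤ (lam0 (Set.Iic t)).toReal := ENNReal.toReal_nonneg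
        rcases Nat.eq_zero_or_pos r with hr0 | hrpos
        · have ht00 : t = 0 := by rw [htdef, hr0]; simp
          have h2 : (lam0 (Set.Iic t)).toReal = 0 := le_antisymm (ht00 ▸ hmeas_le) hnn
          rw [h2, zero_mul]
          positivity
        · have hmax : max r 1 = r := Nat.max_eq_left hrpos
          have hrpos' : (0 : ℝ) < r := by exact_mod_cast hrpos
          calc (lam0 (Set.Iic t)).toReal * ((1 : ℝ) / ((max r 1 : ℕ) : ℝ))
              ≤ t * ((1 : ℝ) / ((max r 1 : ℕ) : ℝ)) := by
                apply mul_le_mul_of_nonneg_right hmeas_le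
                positivity
          _ = a / (m + 1) := by
                rw [hmax, htdef]
                field_simp
      rw [hb]
      simpa [Measure.real] using hfinal
    · have hzero : ∀ u, F (u, w) = 0 := by
        intro u
        rw [hFdef]
        simp [hb]
      simp [hzero, hb]
  have houter : ∫ w, (∫ u, F (u, w) ∂lam0) ∂(P'.prod κ)
      ≤ ∫ w, a / (m + 1) * (if w.2.1 i = false then (1 : ℝ) else 0) ∂(P'.prod κ) := by
    refine integral_mono hFint.integral_prod_right ?_ hinner
    refine Integrable.const_mul ?_ _
    refine Integrable.mono' (integrable_const 1) ?_
      (Filter.Eventually.of_forall fun w => by split <;> simp)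
    have hm : Measurable fun w : (Fin m → ℝ) × ((Fin (m + 1) → Bool) × (Fin (m + 1) → ℝ)) =>
        w.2.1 i := (measurable_pi_apply i).comp (measurable_fst.comp measurable_snd)
    exact (Measurable.ite (hm (MeasurableSet.of_discrete (s := {false})))
      measurable_const measurable_const).aestronglyMeasurable
  have hlast : ∫ w, a / (m + 1) * (if w.2.1 i = false then (1 : ℝ) else 0) ∂(P'.prod κ)
      = a / (m + 1) * ∫ ω, (if H i ω = false then (1 : ℝ) else 0) ∂μ := by
    rw [integral_const_mul]
    congr 1
    have hmeas2 : Measurable fun z : (Fin (m + 1) → Bool) × (Fin (m + 1) → ℝ) =>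
        (if z.1 i = false then (1 : ℝ) else 0) :=
      Measurable.ite (((measurable_pi_apply i).comp measurable_fst :
          Measurable fun z : (Fin (m + 1) → Bool) × (Fin (m + 1) → ℝ) => z.1 i)
        (MeasurableSet.of_discrete (s := {false}))) measurable_const measurable_const
    have h1 : ∫ w, (if w.2.1 i = false then (1 : ℝ) else 0) ∂(P'.prod κ)
        = ∫ z, (if z.1 i = false then (1 : ℝ) else 0) ∂κ := by
      have h2 := integral_map (μ := P'.prod κ) (φ := Prod.snd)
        measurable_snd.aemeasurable hmeas2.aestronglyMeasurable
      rw [Measure.map_snd_prod] at h2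
      simp only [measure_univ, one_smul] at h2
      exact h2.symm
    rw [h1, hκ, integral_map hZmeas.aemeasurable hmeas2.aestronglyMeasurable]
  calc ∫ ω, (if (pv ω i ≤ (R ω : ℝ) / (m + 1) * a ∧ H i ω = false) then (1 : ℝ) else 0)
        / (max (R ω) 1 : ℕ) ∂μ
      ≤ ∫ ω, g ω ∂μ := integral_mono_ae hint_term hint_g hterm_le
  _ = ∫ w, (∫ u, F (u, w) ∂lam0) ∂(P'.prod κ) := by rw [hstep1, hsymm]
  _ ≤ ∫ w, a / (m + 1) * (if w.2.1 i = false then (1 : ℝ) else 0) ∂(P'.prod κ) := houter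
  _ = a / (m + 1) * ∫ ω, (if H i ω = false then (1 : ℝ) else 0) ∂μ := hlast


/-- BH step-down FDR bound: under the BI model, the step-down test with critical values
`α_{i:n} = (i/n)·α` (any `α > 0`) satisfies `E[V_SD/max(R_SD,1)] ≤ (E[N₀]/n)·α`. -/
theorem bh_SD_fdr_bound {Ω : Type*} [MeasurableSpace Ω]
    (μ : Measure Ω) [IsProbabilityMeasure μ] {m : ℕ}
    (H : Fin (m + 1) → Ω → Bool) (U ξ : Fin (m + 1) → Ω → ℝ)
    (hUmeas : ∀ i, Measurable (U i)) (hξmeas : ∀ i, Measurable (ξ i))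
    (hHmeas : ∀ i, Measurable (H i))
    (hUindep : iIndepFun U μ)
    (hUHξ : IndepFun (fun ω => fun i => U i ω)
      (fun ω => ((fun i => H i ω), (fun i => ξ i ω))) μ)
    (hunif : ∀ i, Measure.map (U i) μ = volume.restrict (Set.Ioo (0 : ℝ) 1))
    (hξrange : ∀ i ω, ξ i ω ∈ Set.Icc (0 : ℝ) 1)
    (a : ℝ) (ha : 0 < a) :
    ∫ ω,
        (((Finset.univ.filter fun i : Fin (m + 1) =>
            (if H i ω then ξ i ω else U i ω) ≤
              (sdCount (fun k : Fin (m + 1) => ((k.1 + 1 : ℝ) / (m + 1)) * a)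
                  (fun i => if H i ω then ξ i ω else U i ω) : ℝ) / (m + 1) * a
            ∧ H i ω = false).card : ℝ)
          / (max (sdCount (fun k : Fin (m + 1) => ((k.1 + 1 : ℝ) / (m + 1)) * a)
              (fun i => if H i ω then ξ i ω else U i ω)) 1 : ℕ)) ∂μ
      ≤ (∫ ω, ((Finset.univ.filter fun i => H i ω = false).card : ℝ) ∂μ) / (m + 1) * a := by
  classical
  set c : Fin (m + 1) → ℝ := fun k => ((k.1 + 1 : ℝ) / (m + 1)) * a with hc
  set pv : Ω → Fin (m + 1) → ℝ := fun ω j => if H j ω then ξ j ω else U j ω with hpv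
  have hpvmeas : ∀ j, Measurable fun ω => pv ω j := fun j =>
    Measurable.ite ((hHmeas j) (MeasurableSet.of_discrete (s := {true}))) (hξmeas j) (hUmeas j)
  set R : Ω → ℕ := fun ω => sdCount c (pv ω) with hR
  have hRmeas : Measurable R := measurable_sdCount c hpvmeas
  have hRcast : Measurable fun ω => ((R ω : ℝ) / (m + 1) * a) :=
    (measurable_from_nat (f := fun r : ℕ => (r : ℝ) / (m + 1) * a)).comp hRmeas
  have htermmeas : ∀ i : Fin (m + 1), Measurable fun ω =>
      (if (pv ω i ≤ (R ω : ℝ) / (m + 1) * a ∧ H i ω = false) then (1 : ℝ) else 0)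
        / (max (R ω) 1 : ℕ) := by
    intro i
    refine Measurable.div ?_
      ((measurable_from_nat (f := fun r : ℕ => ((max r 1 : ℕ) : ℝ))).comp hRmeas)
    refine Measurable.ite (MeasurableSet.inter ?_ ?_) measurable_const measurable_const
    · exact measurableSet_le (hpvmeas i) hRcast
    · exact (hHmeas i) (MeasurableSet.of_discrete (s := {false}))
  have hint : ∀ i : Fin (m + 1), Integrable (fun ω =>
      (if (pv ω i ≤ (R ω : ℝ) / (m + 1) * a ∧ H i ω = false) then (1 : ℝ) else 0)
        / (max (R ω) 1 : ℕ)) μ := by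
    intro i
    refine Integrable.mono' (integrable_const 1) (htermmeas i).aestronglyMeasurable
      (Filter.Eventually.of_forall fun ω => ?_)
    rw [Real.norm_eq_abs]
    exact abs_ite_div_le_one _ _
  have hintH : ∀ i : Fin (m + 1),
      Integrable (fun ω => (if H i ω = false then (1 : ℝ) else 0)) μ := by
    intro i
    refine Integrable.mono' (integrable_const 1) (Measurable.ite
      ((hHmeas i) (MeasurableSet.of_discrete (s := {false}))) measurable_const
      measurable_const).aestronglyMeasurable (Filter.Eventually.of_forall fun ω => ?_)
    rw [Real.norm_eq_abs]
    split <;> simp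
  have hLHS : ∫ ω,
        (((Finset.univ.filter fun i : Fin (m + 1) =>
            pv ω i ≤ (R ω : ℝ) / (m + 1) * a ∧ H i ω = false).card : ℝ)
          / (max (R ω) 1 : ℕ)) ∂μ
      = ∑ i : Fin (m + 1), ∫ ω,
          (if (pv ω i ≤ (R ω : ℝ) / (m + 1) * a ∧ H i ω = false) then (1 : ℝ) else 0)
            / (max (R ω) 1 : ℕ) ∂μ := by
    rw [← integral_finset_sum _ fun i _ => hint i]
    refine integral_congr_ae (Filter.Eventually.of_forall fun ω => ?_)
    dsimp only
    rw [← Finset.sum_div]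
    congr 1
    rw [Finset.card_filter]
    push_cast
    rfl
  have hRHS : ∫ ω, ((Finset.univ.filter fun i => H i ω = false).card : ℝ) ∂μ
      = ∑ i : Fin (m + 1), ∫ ω, (if H i ω = false then (1 : ℝ) else 0) ∂μ := by
    rw [← integral_finset_sum _ fun i _ => hintH i]
    refine integral_congr_ae (Filter.Eventually.of_forall fun ω => ?_)
    dsimp only
    rw [Finset.card_filter]
    push_cast
    rfl
  have hgoal : ∀ i : Fin (m + 1), ∫ ω,
      (if (pv ω i ≤ (R ω : ℝ) / (m + 1) * a ∧ H i ω = false) then (1 : ℝ) else 0)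
        / (max (R ω) 1 : ℕ) ∂μ
      ≤ (∫ ω, (if H i ω = false then (1 : ℝ) else 0) ∂μ) / (m + 1) * a := by
    intro i
    have := key_bound μ H U ξ hUmeas hξmeas hHmeas hUindep hUHξ hunif a ha i
    calc ∫ ω, (if (pv ω i ≤ (R ω : ℝ) / (m + 1) * a ∧ H i ω = false) then (1 : ℝ) else 0)
          / (max (R ω) 1 : ℕ) ∂μ
        ≤ a / (m + 1) * ∫ ω, (if H i ω = false then (1 : ℝ) else 0) ∂μ := this
    _ = (∫ ω, (if H i ω = false then (1 : ℝ) else 0) ∂μ) / (m + 1) * a := by ring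
  calc ∫ ω,
        (((Finset.univ.filter fun i : Fin (m + 1) =>
            pv ω i ≤ (R ω : ℝ) / (m + 1) * a ∧ H i ω = false).card : ℝ)
          / (max (R ω) 1 : ℕ)) ∂μ
      = ∑ i : Fin (m + 1), ∫ ω,
          (if (pv ω i ≤ (R ω : ℝ) / (m + 1) * a ∧ H i ω = false) then (1 : ℝ) else 0)
            / (max (R ω) 1 : ℕ) ∂μ := hLHS
  _ ≤ ∑ i : Fin (m + 1),
        (∫ ω, (if H i ω = false then (1 : ℝ) else 0) ∂μ) / (m + 1) * a :=
      Finset.sum_le_sum fun i _ => hgoal i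
  _ = (∑ i : Fin (m + 1), ∫ ω, (if H i ω = false then (1 : ℝ) else 0) ∂μ) / (m + 1) * a := by
      rw [Finset.sum_div, Finset.sum_mul]
  _ = (∫ ω, ((Finset.univ.filter fun i => H i ω = false).card : ℝ) ∂μ) / (m + 1) * a := by
      rw [hRHS]
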